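/- Let G be a group acting by isometries on a geodesic metric space X that is δ-hyperbolic with δ > 0, let 𝒞 = (C, {G_c}_{c∈C}) be a ρ-separated fairly rotating family with ρ ≥ 20δ, and fix R with 2 + 2δ ≤ R ≤ ρ/2 − 3δ. Then for all distinct a, b ∈ C and every nontrivial g ∈ G_a, the projection distance satisfies d_a(b, gb) ≥ 2^{(R−2)/δ} − 4 − 6δ. -/

import Mathlib

open Set

/-- A geodesic from `x` to `y`: an isometric embedding of `[0, dist x y]` with the
prescribed endpoints. -/
def IsGeodesicFrom {X : Type*} [MetricSpace X] (γ : ℝ → X) (x y : X) : Prop :=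
  γ 0 = x ∧ γ (dist x y) = y ∧
    ∀ s ∈ Icc (0:ℝ) (dist x y), ∀ t ∈ Icc (0:ℝ) (dist x y), dist (γ s) (γ t) = |s - t|

/-- A geodesic metric space: every pair of points is joined by a geodesic. -/
def GeodesicMetricSpace (X : Type*) [MetricSpace X] : Prop :=
  ∀ x y : X, ∃ γ : ℝ → X, IsGeodesicFrom γ x y

/-- The Gromov product `(b,c)_a`. -/
noncomputable def gromovProd {X : Type*} [MetricSpace X] (a b c : X) : ℝ :=
  (dist a b + dist a c - dist b c) / 2

/-- `δ`-hyperbolicity via `δ`-thin triangles: two sides of a geodesic triangle issuing from a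
common vertex stay `δ`-close up to the Gromov product (this is exactly the condition that
pairs of points of the triangle with the same image in the comparison tripod are `δ`-close). -/
def DeltaThin (X : Type*) [MetricSpace X] (δ : ℝ) : Prop :=
  ∀ (a b c : X) (γ₁ γ₂ : ℝ → X), IsGeodesicFrom γ₁ a b → IsGeodesicFrom γ₂ a c →
    ∀ t ∈ Icc (0:ℝ) (gromovProd a b c), dist (γ₁ t) (γ₂ t) ≤ δ

/-- A subset `C` is `ρ`-separated if distinct points of `C` are at distance at least `ρ`. -/
def Separated {X : Type*} [MetricSpace X] (C : Set X) (ρ : ℝ) : Prop :=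
  ∀ c ∈ C, ∀ c' ∈ C, c ≠ c' → ρ ≤ dist c c'

/-- A rotating family: a `G`-invariant set of apices `C` together with subgroups `G_c`
fixing `c` and compatible with conjugation. -/
structure RotatingFamily {X G : Type*} [MetricSpace X] [Group G] [MulAction G X]
    (C : Set X) (Gc : X → Subgroup G) : Prop where
  invariant : ∀ (g : G), ∀ c ∈ C, g • c ∈ C
  fixes : ∀ c ∈ C, ∀ g ∈ Gc c, g • c = c
  conj : ∀ (g : G), ∀ c ∈ C, Gc (g • c) = Subgroup.map (MulAut.conj g).toMonoidHom (Gc c)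

/-- The family is fairly rotating: for each apex `c`, nontrivial `g ∈ G_c` and apex `x ≠ c`,
some geodesic from `x` to `g • x` meets the closed ball of radius `1` around `c`. -/
def FairlyRotating {X G : Type*} [MetricSpace X] [Group G] [MulAction G X]
    (C : Set X) (Gc : X → Subgroup G) : Prop :=
  ∀ c ∈ C, ∀ g ∈ Gc c, g ≠ 1 → ∀ x ∈ C, x ≠ c →
    ∃ γ : ℝ → X, IsGeodesicFrom γ x (g • x) ∧
      ∃ t ∈ Icc (0:ℝ) (dist x (g • x)), dist (γ t) c ≤ 1

open scoped ENNReal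

/-- The path metric of `X ∖ B_R(p)`: the distance from `u` to `v` is the infimum of the
lengths (total variations) of continuous paths from `u` to `v` avoiding the open ball
`B_R(p)`, and `∞` if there is no such path. -/
noncomputable def pathDist {X : Type*} [MetricSpace X] (p : X) (R : ℝ) (u v : X) : ℝ≥0∞ :=
  ⨅ γ ∈ {γ : ℝ → X | ContinuousOn γ (Icc 0 1) ∧ γ 0 = u ∧ γ 1 = v ∧
      ∀ t ∈ Icc (0:ℝ) 1, R ≤ dist (γ t) p},
    eVariationOn γ (Icc (0:ℝ) 1)

/-- The projection `π_p(a)`: the set of points in which geodesics from `p` to `a` meet the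
sphere `S_p = ∂B_R(p)`. -/
def projSet {X : Type*} [MetricSpace X] (p : X) (R : ℝ) (a : X) : Set X :=
  {x : X | dist x p = R ∧
    ∃ γ : ℝ → X, IsGeodesicFrom γ p a ∧ ∃ t ∈ Icc (0:ℝ) (dist p a), γ t = x}

/-- The projection distance `d_p(a,b) = diam(π_p(a) ∪ π_p(b))`, the diameter being taken in
the path metric of `X ∖ B_R(p)`. -/
noncomputable def projDist {X : Type*} [MetricSpace X] (p : X) (R : ℝ) (a b : X) : ℝ≥0∞ :=
  ⨆ x ∈ projSet p R a ∪ projSet p R b, ⨆ y ∈ projSet p R a ∪ projSet p R b,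
    pathDist p R x y

section Auxiliary

variable {X : Type*} [MetricSpace X]

private lemma geo_dist_left {γ : ℝ → X} {x y : X}
    (h : IsGeodesicFrom γ x y) {s : ℝ} (hs : s ∈ Icc 0 (dist x y)) :
    dist (γ s) x = s := by
  have h0 : (0:ℝ) ∈ Icc (0:ℝ) (dist x y) := ⟨le_refl _, dist_nonneg⟩
  have hd := h.2.2 s hs 0 h0
  rw [h.1] at hd
  rw [hd, sub_zero, abs_of_nonneg hs.1]

private lemma geo_dist_right {γ : ℝ → X} {x y : X}
    (h : IsGeodesicFrom γ x y) {s : ℝ} (hs : s ∈ Icc 0 (dist x y)) :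
    dist (γ s) y = dist x y - s := by
  have h1 : dist x y ∈ Icc (0:ℝ) (dist x y) := ⟨dist_nonneg, le_refl _⟩
  have hd := h.2.2 s hs (dist x y) h1
  rw [h.2.1] at hd
  rw [hd, abs_of_nonpos (by linarith [hs.2]), neg_sub]

private lemma geo_restrict {γ : ℝ → X} {x y : X}
    (h : IsGeodesicFrom γ x y) {r : ℝ} (hr : r ∈ Icc 0 (dist x y)) :
    IsGeodesicFrom γ x (γ r) := by
  have hd : dist x (γ r) = r := by rw [dist_comm]; exact geo_dist_left h hr
  refine ⟨h.1, by rw [hd], ?_⟩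
  intro s hs t ht
  rw [hd] at hs ht
  exact h.2.2 s ⟨hs.1, hs.2.trans hr.2⟩ t ⟨ht.1, ht.2.trans hr.2⟩

/-- The descent/contraction lemma: points of a chain lying outside the ball of radius `R`
around `a`, with consecutive gaps at most `h`, have radial projections that contract
exponentially: indices `2^k` apart project `δ`-close at depth `h/2 + k·δ` below `R`. -/
private lemma descend {δ : ℝ} (hδ : 0 < δ)
    (hthin : DeltaThin X δ) (a : X) {R h : ℝ} (hh : 0 ≤ h)
    {m : ℕ} {z : ℕ → X} {gg : ℕ → ℝ → X}
    (hz : ∀ i ≤ m, R ≤ dist a (z i))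
    (hgeod : ∀ i ≤ m, IsGeodesicFrom (gg i) a (z i))
    (hgap : ∀ i < m, dist (z i) (z (i+1)) ≤ h) :
    ∀ k : ℕ, ∀ i j : ℕ, i ≤ j → j ≤ m → j ≤ i + 2^k →
      ∀ r : ℝ, 0 ≤ r → r + h/2 + (k:ℝ) * δ ≤ R → dist (gg i r) (gg j r) ≤ δ := by
  intro k
  induction k with
  | zero =>
    intro i j hij hjm hj2 r hr0 hrR
    rcases eq_or_lt_of_le hij with rfl | hlt
    · simpa [dist_self] using hδ.le
    · have hj : j = i + 1 := by omega
      subst hj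
      have him : i ≤ m := by omega
      have hza := hz i him
      have hzb := hz (i+1) hjm
      have hgab := hgap i (by omega)
      have hrR' : r + h/2 ≤ R := by push_cast at hrR; linarith
      have hgp : r ∈ Icc 0 (gromovProd a (z i) (z (i+1))) := by
        refine ⟨hr0, ?_⟩
        show r ≤ (dist a (z i) + dist a (z (i+1)) - dist (z i) (z (i+1))) / 2
        linarith
      exact hthin a (z i) (z (i+1)) (gg i) (gg (i+1)) (hgeod i him) (hgeod (i+1) hjm) r hgp
  | succ k ih =>
    intro i j hij hjm hj2 r hr0 hrR
    have hkd : (0:ℝ) ≤ (k:ℝ) * δ := by positivity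
    by_cases hsmall : j ≤ i + 2^k
    · refine ih i j hij hjm hsmall r hr0 ?_
      push_cast at hrR ⊢
      nlinarith [hδ.le]
    · push_neg at hsmall
      set l := i + 2^k with hl
      have hlj : l ≤ j := hsmall.le
      have hlm : l ≤ m := hlj.trans hjm
      have him : i ≤ m := hij.trans hjm
      have hp : 2^(k+1) = 2^k + 2^k := by ring
      have hj2' : j ≤ l + 2^k := by omega
      set r' := r + δ with hr'
      have hr'0 : 0 ≤ r' := by linarith [hδ.le]
      have hk : r' + h/2 + (k:ℝ)*δ ≤ R := by push_cast at hrR ⊢; linarith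
      have hr'R : r' ≤ R := by linarith
      have d1 := ih i l (Nat.le_add_right _ _) hlm le_rfl r' hr'0 hk
      have d2 := ih l j hlj hjm hj2' r' hr'0 hk
      have hr'i : r' ∈ Icc 0 (dist a (z i)) := ⟨hr'0, hr'R.trans (hz i him)⟩
      have hr'j : r' ∈ Icc 0 (dist a (z j)) := ⟨hr'0, hr'R.trans (hz j hjm)⟩
      have gi : IsGeodesicFrom (gg i) a (gg i r') := geo_restrict (hgeod i him) hr'i
      have gj : IsGeodesicFrom (gg j) a (gg j r') := geo_restrict (hgeod j hjm) hr'j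
      have hdaP : dist a (gg i r') = r' := by
        rw [dist_comm]; exact geo_dist_left (hgeod i him) hr'i
      have hdaQ : dist a (gg j r') = r' := by
        rw [dist_comm]; exact geo_dist_left (hgeod j hjm) hr'j
      have hPQ : dist (gg i r') (gg j r') ≤ 2*δ := by
        calc dist (gg i r') (gg j r') ≤ dist (gg i r') (gg l r') + dist (gg l r') (gg j r') :=
              dist_triangle _ _ _
          _ ≤ 2*δ := by linarith
      have hgp : r ∈ Icc 0 (gromovProd a (gg i r') (gg j r')) := by
        refine ⟨hr0, ?_⟩
        show r ≤ (dist a (gg i r') + dist a (gg j r') - dist (gg i r') (gg j r')) / 2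
        rw [hdaP, hdaQ]
        linarith
      exact hthin a (gg i r') (gg j r') (gg i) (gg j) gi gj r hgp

/-- Greedy subdivision of a continuous path into a chain with gaps at most `h`, whose
cardinality registers the total variation. -/
private lemma subdiv (γ : ℝ → X) (hc : ContinuousOn γ (Icc 0 1)) {h : ℝ} (hh : 0 < h) :
    ∀ n : ℕ, ∀ u : ℝ, u ∈ Icc (0:ℝ) 1 →
      eVariationOn γ (Icc u 1) ≤ ENNReal.ofReal (n * h) →
      ∃ (m : ℕ) (t : ℕ → ℝ), 1 ≤ m ∧ t 0 = u ∧ t m = 1 ∧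
        (∀ i ≤ m, t i ∈ Icc u 1) ∧
        (∀ i < m, dist (γ (t i)) (γ (t (i+1))) ≤ h) ∧
        ENNReal.ofReal (m * h) ≤ eVariationOn γ (Icc u 1) + ENNReal.ofReal h := by
  intro n
  induction n with
  | zero =>
    intro u hu hE
    refine ⟨1, fun i => if i = 0 then u else 1, le_rfl, by simp, by simp, ?_, ?_, ?_⟩
    · intro i _
      by_cases hi0 : i = 0 <;> simp [hi0, hu.2, le_refl]
    · intro i hi
      have hi0 : i = 0 := by omega
      subst hi0
      show dist (γ u) (γ 1) ≤ h
      have hu1 : u ∈ Icc u 1 := ⟨le_rfl, hu.2⟩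
      have h11 : (1:ℝ) ∈ Icc u 1 := ⟨hu.2, le_rfl⟩
      have h1 : edist (γ u) (γ 1) ≤ (0:ℝ≥0∞) := by
        refine le_trans (eVariationOn.edist_le γ hu1 h11) ?_
        simpa using hE
      have h2 : γ u = γ 1 := by
        simpa [edist_eq_zero] using le_antisymm h1 zero_le
      rw [h2]
      simp [hh.le]
    · rw [Nat.cast_one, one_mul]
      exact self_le_add_left _ _
  | succ n ih =>
    intro u hu hE
    by_cases hclose : dist (γ u) (γ 1) ≤ h
    · refine ⟨1, fun i => if i = 0 then u else 1, le_rfl, by simp, by simp, ?_, ?_, ?_⟩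
      · intro i _
        by_cases hi0 : i = 0 <;> simp [hi0, hu.2, le_refl]
      · intro i hi
        have hi0 : i = 0 := by omega
        subst hi0
        show dist (γ u) (γ 1) ≤ h
        exact hclose
      · rw [Nat.cast_one, one_mul]
        exact self_le_add_left _ _
    · push_neg at hclose
      have hsub : Icc u 1 ⊆ Icc (0:ℝ) 1 := Icc_subset_Icc hu.1 le_rfl
      have hcontd : ContinuousOn (fun s => dist (γ u) (γ s)) (Icc u 1) :=
        continuous_dist.comp_continuousOn (f := fun s => (γ u, γ s)) (ContinuousOn.prodMk continuousOn_const (hc.mono hsub))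
      set S := {s : ℝ | s ∈ Icc u 1 ∧ h ≤ dist (γ u) (γ s)} with hSdef
      have hS1 : (1:ℝ) ∈ S := ⟨⟨hu.2, le_rfl⟩, hclose.le⟩
      have hSbdd : BddBelow S := ⟨u, fun s hs => hs.1.1⟩
      have hSclosed : IsClosed S := by
        have hEq : S = Icc u 1 ∩ (fun s => dist (γ u) (γ s)) ⁻¹' (Ici h) := by
          ext s
          simp only [hSdef, mem_setOf_eq, mem_inter_iff, mem_preimage, mem_Ici]
        rw [hEq]
        exact hcontd.preimage_isClosed_of_isClosed isClosed_Icc isClosed_Ici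
      set v := sInf S with hvdef
      have hvS : v ∈ S := hSclosed.csInf_mem ⟨1, hS1⟩ hSbdd
      have huv' : u ≤ v := le_csInf ⟨1, hS1⟩ fun s hs => hs.1.1
      have huv : u < v := by
        rcases lt_or_eq_of_le huv' with hlt | heq
        · exact hlt
        · exfalso
          have := hvS.2
          rw [← heq] at this
          simp only [dist_self] at this
          linarith
      have hvle : dist (γ u) (γ v) ≤ h := by
        refine _root_.le_of_forall_pos_le_add ?_
        intro ε hε
        have hcv : ContinuousWithinAt (fun s => dist (γ u) (γ s)) (Icc u 1) v :=
          hcontd v hvS.1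
        rw [Metric.continuousWithinAt_iff] at hcv
        obtain ⟨d, hd, hdd⟩ := hcv ε hε
        set s := max u (v - d/2) with hsdef
        have hsmem : s ∈ Icc u 1 := ⟨le_max_left _ _, max_le hu.2 (by linarith [hvS.1.2])⟩
        have hslt : s < v := max_lt huv (by linarith)
        have hsge : v - d/2 ≤ s := le_max_right _ _
        have hdist : dist s v < d := by
          rw [Real.dist_eq, abs_of_nonpos (by linarith)]
          linarith
        have h1 := hdd hsmem hdist
        have h2 : dist (γ u) (γ s) ≤ h := by
          by_contra hcon
          have hsS : s ∈ S := ⟨hsmem, (lt_of_not_ge hcon).le⟩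
          exact absurd (csInf_le hSbdd hsS) (not_le.2 hslt)
        rw [Real.dist_eq] at h1
        have h3 := abs_lt.mp h1
        linarith [h3.1]
      have hvge : h ≤ dist (γ u) (γ v) := hvS.2
      have hsplit : eVariationOn γ (Icc u v) + eVariationOn γ (Icc v 1)
          = eVariationOn γ (Icc u 1) := by
        have := eVariationOn.Icc_add_Icc γ (s := univ) huv.le hvS.1.2 (mem_univ v)
        simpa [univ_inter] using this
      have hE1 : ENNReal.ofReal h ≤ eVariationOn γ (Icc u v) := by
        have huuv : u ∈ Icc u v := ⟨le_rfl, huv.le⟩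
        have hvuv : v ∈ Icc u v := ⟨huv.le, le_rfl⟩
        calc ENNReal.ofReal h ≤ ENNReal.ofReal (dist (γ u) (γ v)) :=
              ENNReal.ofReal_le_ofReal hvge
          _ = edist (γ u) (γ v) := (edist_dist _ _).symm
          _ ≤ _ := eVariationOn.edist_le γ huuv hvuv
      have hE2 : eVariationOn γ (Icc v 1) ≤ ENNReal.ofReal (n * h) := by
        have hkey : eVariationOn γ (Icc v 1) + ENNReal.ofReal h
            ≤ ENNReal.ofReal (n * h) + ENNReal.ofReal h := by
          calc eVariationOn γ (Icc v 1) + ENNReal.ofReal h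
              ≤ eVariationOn γ (Icc v 1) + eVariationOn γ (Icc u v) :=
                add_le_add_right hE1 _
            _ = eVariationOn γ (Icc u 1) := by rw [add_comm]; exact hsplit
            _ ≤ ENNReal.ofReal ((n+1 : ℕ) * h) := hE
            _ = ENNReal.ofReal (n * h) + ENNReal.ofReal h := by
                rw [← ENNReal.ofReal_add (by positivity) hh.le]
                push_cast
                ring_nf
        exact (ENNReal.add_le_add_iff_right ENNReal.ofReal_ne_top).mp hkey
      obtain ⟨m', t', hm', ht'0, ht'm, ht'mem, ht'gap, ht'count⟩ :=
        ih v ⟨hu.1.trans huv.le, hvS.1.2⟩ hE2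
      refine ⟨m' + 1, fun i => if i = 0 then u else t' (i - 1), by omega, by simp, ?_, ?_, ?_, ?_⟩
      · simp only [if_neg (Nat.succ_ne_zero m'), Nat.add_sub_cancel]
        exact ht'm
      · intro i hi
        by_cases hi0 : i = 0
        · simp only [hi0, if_pos rfl]
          exact ⟨le_rfl, hu.2⟩
        · simp only [if_neg hi0]
          have := ht'mem (i-1) (by omega)
          exact ⟨huv.le.trans this.1, this.2⟩
      · intro i hi
        by_cases hi0 : i = 0
        · subst hi0
          show dist (γ u) (γ (t' 0)) ≤ h
          rw [ht'0]
          exact hvle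
        · simp only [if_neg hi0, if_neg (by omega : i + 1 ≠ 0)]
          have hidx : i + 1 - 1 = (i - 1) + 1 := by omega
          rw [hidx]
          exact ht'gap (i-1) (by omega)
      · have hfirst : ENNReal.ofReal (m' * h) ≤ eVariationOn γ (Icc u 1) := by
          calc ENNReal.ofReal (m' * h) ≤ eVariationOn γ (Icc v 1) + ENNReal.ofReal h :=
                ht'count
            _ ≤ eVariationOn γ (Icc v 1) + eVariationOn γ (Icc u v) := add_le_add_right hE1 _
            _ = eVariationOn γ (Icc u 1) := by rw [add_comm]; exact hsplit
        calc ENNReal.ofReal ((m'+1 : ℕ) * h)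
            = ENNReal.ofReal (m' * h) + ENNReal.ofReal h := by
              rw [← ENNReal.ofReal_add (by positivity) hh.le]
              push_cast
              ring_nf
          _ ≤ eVariationOn γ (Icc u 1) + ENNReal.ofReal h := add_le_add_left hfirst _

end Auxiliary

set_option maxHeartbeats 2000000 in
/-- **The spinning estimate**: for a `ρ`-separated fairly rotating family, distinct apices
`a, b ∈ C` and nontrivial `g ∈ G_a`, the projection distance satisfies
`d_a(b, g·b) ≥ 2^((R−2)/δ) − 4 − 6δ`. -/
theorem statement8 {X G : Type*} [MetricSpace X] [Group G] [MulAction G X]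
    (hiso : ∀ g : G, Isometry (fun x : X => g • x))
    (δ ρ R : ℝ) (hδ : 0 < δ)
    (hgeo : GeodesicMetricSpace X) (hthin : DeltaThin X δ)
    (C : Set X) (Gc : X → Subgroup G)
    (hrot : RotatingFamily C Gc) (hsep : Separated C ρ) (hfair : FairlyRotating C Gc)
    (hρ : 20 * δ ≤ ρ) (hR₁ : 2 + 2 * δ ≤ R) (hR₂ : R ≤ ρ / 2 - 3 * δ) :
    ∀ a ∈ C, ∀ b ∈ C, a ≠ b → ∀ g ∈ Gc a, g ≠ 1 →
      ENNReal.ofReal ((2:ℝ) ^ ((R - 2) / δ) - 4 - 6 * δ) ≤ projDist a R b (g • b) := by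
  classical
  intro a ha b hb hab g hg hg1
  have hlog2 : (0:ℝ) < Real.log 2 := Real.log_pos (by norm_num)
  have hl2 : (0.6931471803 : ℝ) < Real.log 2 := Real.log_two_gt_d9
  obtain ⟨u0, hu0⟩ : ∃ u : ℝ, u = δ / Real.log 2 := ⟨_, rfl⟩
  have hu0pos : 0 < u0 := by rw [hu0]; exact div_pos hδ hlog2
  have hu0δ : u0 ≤ 1.5 * δ := by
    rw [hu0, div_le_iff₀ hlog2]
    nlinarith
  obtain ⟨hstep, hhstep⟩ : ∃ s : ℝ, s = 2 * u0 := ⟨_, rfl⟩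
  have hsteppos : 0 < hstep := by rw [hhstep]; linarith
  have hR0 : (0:ℝ) < R := by linarith
  have hρab : ρ ≤ dist a b := hsep a ha b hb hab
  have hRab : R ≤ dist a b := by linarith
  have hga : g • a = a := hrot.fixes a ha g hg
  have hdagb : dist a (g • b) = dist a b := by
    conv_lhs => rw [← hga]
    exact (hiso g).dist_eq a b
  have hRagb : R ≤ dist a (g • b) := by rw [hdagb]; exact hRab
  obtain ⟨γb, hγb⟩ := hgeo a b
  obtain ⟨γgb, hγgb⟩ := hgeo a (g • b)
  have hRmemb : R ∈ Icc (0:ℝ) (dist a b) := ⟨hR0.le, hRab⟩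
  have hRmemgb : R ∈ Icc (0:ℝ) (dist a (g • b)) := ⟨hR0.le, hRagb⟩
  set x := γb R with hxdef
  set y := γgb R with hydef
  have hxa : dist x a = R := geo_dist_left hγb hRmemb
  have hya : dist y a = R := geo_dist_left hγgb hRmemgb
  have hxmem : x ∈ projSet a R b := ⟨hxa, γb, hγb, R, hRmemb, rfl⟩
  have hymem : y ∈ projSet a R (g • b) := ⟨hya, γgb, hγgb, R, hRmemgb, rfl⟩
  -- the Gromov product `(b, g·b)_a` is at most 1, by the fair rotation hypothesis
  obtain ⟨σ, hσ, t₀, ht₀, hσa⟩ := hfair a ha g hg hg1 b hb (Ne.symm hab)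
  have hgp : dist a b + dist a (g • b) - dist b (g • b) ≤ 2 := by
    have hσb : dist (σ t₀) b = t₀ := geo_dist_left hσ ht₀
    have hσgb : dist (σ t₀) (g • b) = dist b (g • b) - t₀ := geo_dist_right hσ ht₀
    have h1 : dist a b ≤ dist a (σ t₀) + dist (σ t₀) b := dist_triangle _ _ _
    have h2 : dist a (g • b) ≤ dist a (σ t₀) + dist (σ t₀) (g • b) := dist_triangle _ _ _
    have h3 : dist a (σ t₀) ≤ 1 := by rw [dist_comm]; exact hσa
    linarith
  -- a general lower bound for the distance between points on the two radii
  have hlow : ∀ r : ℝ, 0 ≤ r → r ≤ R → 2*r - 2 ≤ dist (γb r) (γgb r) := by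
    intro r h0 hrR
    have hb1 : dist (γb r) b = dist a b - r := geo_dist_right hγb ⟨h0, hrR.trans hRab⟩
    have hb2 : dist (γgb r) (g • b) = dist a (g • b) - r := geo_dist_right hγgb ⟨h0, hrR.trans hRagb⟩
    have htr : dist b (g • b) ≤ dist b (γb r) + dist (γb r) (γgb r) + dist (γgb r) (g • b) :=
      dist_triangle4 _ _ _ _
    rw [dist_comm b (γb r)] at htr
    linarith
  -- reduce to a lower bound for the variation of each admissible path from x to y
  unfold projDist
  refine le_iSup₂_of_le x (Set.mem_union_left _ hxmem)
    (le_iSup₂_of_le y (Set.mem_union_right _ hymem) ?_)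
  unfold pathDist
  refine le_iInf₂ fun γp hγp => ?_
  obtain ⟨hcont, hp0, hp1, hpR⟩ := hγp
  by_cases hEtop : eVariationOn γp (Icc (0:ℝ) 1) = ⊤
  · rw [hEtop]; exact le_top
  -- fuel for the greedy subdivision
  set n : ℕ := ⌈(eVariationOn γp (Icc (0:ℝ) 1)).toReal / hstep⌉₊ with hn
  have hfuel : eVariationOn γp (Icc (0:ℝ) 1) ≤ ENNReal.ofReal (n * hstep) := by
    conv_lhs => rw [← ENNReal.ofReal_toReal hEtop]
    apply ENNReal.ofReal_le_ofReal
    rw [← div_le_iff₀ hsteppos]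
    exact Nat.le_ceil _
  obtain ⟨m, t, hm1, ht0, htm, htmem, htgap, htcount⟩ :=
    subdiv γp hcont hsteppos n 0 ⟨le_rfl, by norm_num⟩ hfuel
  -- the chain and the chosen geodesics to its points
  set z : ℕ → X := fun i => γp (t i) with hzdef
  have hzR : ∀ i ≤ m, R ≤ dist a (z i) := by
    intro i hi
    rw [dist_comm]
    exact hpR (t i) (htmem i hi)
  set gg : ℕ → ℝ → X := fun i =>
    if i = 0 then γb else if i = m then γgb else Classical.choose (hgeo a (z i)) with hggdef
  have hz0 : z 0 = x := by rw [hzdef]; simp only [ht0]; rw [hp0]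
  have hzm : z m = y := by rw [hzdef]; simp only [htm]; rw [hp1]
  have hggeod : ∀ i ≤ m, IsGeodesicFrom (gg i) a (z i) := by
    intro i hi
    by_cases hi0 : i = 0
    · subst hi0
      simp only [hggdef, if_pos rfl]
      rw [hz0]
      exact geo_restrict hγb hRmemb
    · by_cases him : i = m
      · subst him
        simp only [hggdef, if_neg hi0, if_pos rfl]
        rw [hzm]
        exact geo_restrict hγgb hRmemgb
      · simp only [hggdef, if_neg hi0, if_neg him]
        exact Classical.choose_spec (hgeo a (z i))
  have hdescend := descend hδ hthin a hsteppos.le hzR hggeod htgap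
  have hgg0 : gg 0 = γb := by simp [hggdef]
  have hggm : gg m = γgb := by
    have hm0 : m ≠ 0 := by omega
    simp [hggdef, hm0]
  rcases eq_or_lt_of_le hm1 with hm1' | hm2
  · -- m = 1 : impossible, since then x and y would be too close
    exfalso
    obtain ⟨r, hrdef⟩ : ∃ r : ℝ, r = R - hstep/2 := ⟨_, rfl⟩
    have hr0 : (0:ℝ) ≤ r := by rw [hrdef, hhstep]; linarith
    have hd := hdescend 0 0 1 (by omega) (by omega) (by norm_num) r hr0
      (by rw [hrdef]; push_cast; linarith)
    have hgg1 : gg 1 = γgb := by rw [hm1']; exact hggm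
    rw [hgg0, hgg1] at hd
    have hlow' := hlow r hr0 (by rw [hrdef]; linarith)
    rw [hrdef, hhstep] at hlow' hd
    linarith
  · -- m ≥ 2
    have hm2' : 1 < m := hm2
    have hclogpos : 0 < Nat.clog 2 m := Nat.clog_pos (by norm_num) (by omega)
    obtain ⟨k0, hKk0⟩ : ∃ k, Nat.clog 2 m = k + 1 := ⟨Nat.clog 2 m - 1, by omega⟩
    have hmle : m ≤ 2^k0 + 2^k0 := by
      have h1 := Nat.le_pow_clog (by norm_num : 1 < 2) m
      rw [hKk0] at h1
      have h2 : 2^(k0+1) = 2^k0 + 2^k0 := by ring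
      omega
    have hmgt : 2^k0 < m := by
      have h3 := Nat.pow_pred_clog_lt_self (by norm_num : 1 < 2) hm2'
      rw [hKk0] at h3
      simpa using h3
    obtain ⟨r', hr'def⟩ : ∃ r : ℝ, r = R - hstep/2 - (k0:ℝ)*δ := ⟨_, rfl⟩
    have hk0δ : (0:ℝ) ≤ (k0:ℝ)*δ := by positivity
    have hr'leR : r' ≤ R := by rw [hr'def]; linarith [hsteppos.le]
    have hr'bound : r' ≤ 1 + δ := by
      by_cases hr'0 : 0 ≤ r'
      · have hc1 : r' + hstep/2 + (k0:ℝ)*δ ≤ R := by rw [hr'def]; linarith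
        have d1 := hdescend k0 0 (2^k0) (by omega) (by omega) (by omega) r' hr'0 hc1
        have d2 := hdescend k0 (2^k0) m (by omega) le_rfl (by omega) r' hr'0 hc1
        rw [hgg0] at d1
        rw [hggm] at d2
        have hdd : dist (γb r') (γgb r') ≤ 2*δ := by
          calc dist (γb r') (γgb r')
              ≤ dist (γb r') (gg (2^k0) r') + dist (gg (2^k0) r') (γgb r') := dist_triangle _ _ _
            _ ≤ 2*δ := by linarith
        have := hlow r' hr'0 hr'leR
        linarith
      · push_neg at hr'0
        linarith [hδ.le]
    have hk0ge : R - 1 - δ - hstep/2 ≤ (k0:ℝ)*δ := by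
      rw [hr'def] at hr'bound
      linarith
    -- the key real inequality
    have hkey : (2:ℝ) ^ ((R-2)/δ) ≤ ((2^k0 : ℕ) : ℝ) * hstep := by
      have hδu : δ = u0 * Real.log 2 := by
        rw [hu0]
        field_simp
      have hului : u0 - 1 ≤ u0 * Real.log u0 := by
        have h1 : Real.log u0⁻¹ ≤ u0⁻¹ - 1 := Real.log_le_sub_one_of_pos (by positivity)
        rw [Real.log_inv] at h1
        have h2 := mul_le_mul_of_nonneg_left h1 hu0pos.le
        have h3 : u0 * u0⁻¹ = 1 := mul_inv_cancel₀ hu0pos.ne'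
        nlinarith
      have hprod : δ * Real.logb 2 hstep = δ + u0 * Real.log u0 := by
        rw [Real.logb, hhstep, Real.log_mul two_ne_zero hu0pos.ne', hδu]
        field_simp [hlog2.ne']
      have h2u : hstep / 2 = u0 := by rw [hhstep]; ring
      have hexp : (R-2)/δ ≤ Real.logb 2 hstep + (R - 1 - δ - hstep/2)/δ := by
        rw [div_le_iff₀ hδ, add_mul, div_mul_cancel₀ _ hδ.ne']
        linarith [hprod, hului]
      have hc2 : ((2^k0 : ℕ) : ℝ) = (2:ℝ) ^ ((k0:ℕ):ℝ) := by
        rw [Real.rpow_natCast]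
        push_cast
        ring
      calc (2:ℝ)^((R-2)/δ)
          ≤ (2:ℝ)^(Real.logb 2 hstep + (R - 1 - δ - hstep/2)/δ) :=
            Real.rpow_le_rpow_of_exponent_le one_le_two hexp
        _ = hstep * (2:ℝ)^((R - 1 - δ - hstep/2)/δ) := by
            rw [Real.rpow_add (by norm_num : (0:ℝ) < 2),
              Real.rpow_logb (by norm_num) (by norm_num) hsteppos]
        _ ≤ hstep * (2:ℝ)^((k0:ℕ):ℝ) := by
            refine mul_le_mul_of_nonneg_left ?_ hsteppos.le
            refine Real.rpow_le_rpow_of_exponent_le one_le_two ?_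
            rw [div_le_iff₀ hδ]
            linarith
        _ = ((2^k0 : ℕ) : ℝ) * hstep := by rw [hc2]; ring
    -- conclude in ℝ≥0∞
    have hEge : ENNReal.ofReal (((2^k0 : ℕ) : ℝ) * hstep) ≤ eVariationOn γp (Icc (0:ℝ) 1) := by
      have hm1h : ((2^k0 : ℕ) : ℝ) * hstep + hstep ≤ (m:ℝ) * hstep := by
        have hcast : ((2^k0 : ℕ):ℝ) + 1 ≤ (m:ℝ) := by
          exact_mod_cast Nat.succ_le_of_lt hmgt
        nlinarith [hsteppos.le]
      have h1 : ENNReal.ofReal (((2^k0 : ℕ):ℝ) * hstep) + ENNReal.ofReal hstep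
          ≤ eVariationOn γp (Icc (0:ℝ) 1) + ENNReal.ofReal hstep := by
        calc ENNReal.ofReal (((2^k0 : ℕ):ℝ) * hstep) + ENNReal.ofReal hstep
            = ENNReal.ofReal (((2^k0 : ℕ):ℝ) * hstep + hstep) := by
              rw [← ENNReal.ofReal_add (by positivity) hsteppos.le]
          _ ≤ ENNReal.ofReal ((m:ℝ) * hstep) := ENNReal.ofReal_le_ofReal hm1h
          _ ≤ eVariationOn γp (Icc (0:ℝ) 1) + ENNReal.ofReal hstep := htcount
      exact (ENNReal.add_le_add_iff_right ENNReal.ofReal_ne_top).mp h1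
    calc ENNReal.ofReal ((2:ℝ) ^ ((R - 2) / δ) - 4 - 6 * δ)
        ≤ ENNReal.ofReal (((2^k0 : ℕ):ℝ) * hstep) :=
          ENNReal.ofReal_le_ofReal (by nlinarith [hδ.le])
      _ ≤ eVariationOn γp (Icc (0:ℝ) 1) := hEge
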